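/- Under Doeblin's condition p(x,E) ≥ ε μ(E) for all x, E (with 0 < ε ≤ 1 and μ a probability measure), the induced operator T on signed measures satisfies: for any two probability measures ν₁, ν₂, ‖T ν₁ − T ν₂‖_TV ≤ (1 − ε) ‖ν₁ − ν₂‖_TV, where ‖·‖_TV denotes the total variation norm. Consequently T has at most one invariant probability measure. -/

import Mathlib

open MeasureTheory ProbabilityTheory

section Aux

variable {X : Type*} [MeasurableSpace X]

lemma coe_nnreal_eq_ofReal (x : ℝ) (h : 0 ≤ x) :
    ENNReal.ofNNReal ⟨x, h⟩ = ENNReal.ofReal x :=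
  (ENNReal.ofReal_eq_coe_nnreal h).symm

/-- Doeblin contraction for the total variation of the difference of two probability
measures under a Markov kernel satisfying Doeblin's minorization condition. -/
lemma doeblin_tv_contraction (p : Kernel X X) [IsMarkovKernel p]
    (μ : Measure X) [IsProbabilityMeasure μ] (ε : ℝ) (hε0 : 0 < ε) (hε1 : ε ≤ 1)
    (hdoeblin : ∀ (x : X) (E : Set X), MeasurableSet E →
      ENNReal.ofReal ε * μ E ≤ p x E)
    (ν₁ ν₂ : Measure X) [IsProbabilityMeasure ν₁] [IsProbabilityMeasure ν₂]
    [IsFiniteMeasure (ν₁.bind p)] [IsFiniteMeasure (ν₂.bind p)] :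
    ((ν₁.bind p).toSignedMeasure - (ν₂.bind p).toSignedMeasure).totalVariation Set.univ
      ≤ ENNReal.ofReal (1 - ε) *
        ((ν₁.toSignedMeasure - ν₂.toSignedMeasure).totalVariation Set.univ) := by
  set s : SignedMeasure X := ν₁.toSignedMeasure - ν₂.toSignedMeasure with hs_def
  set s' : SignedMeasure X := (ν₁.bind p).toSignedMeasure - (ν₂.bind p).toSignedMeasure
    with hs'_def
  obtain ⟨i, hi₁, hi₂, hi₃, hpos, hneg⟩ := s.toJordanDecomposition_spec
  have hsapp : ∀ A : Set X, MeasurableSet A →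
      s A = (ν₁ A).toReal - (ν₂ A).toReal := fun A hA =>
    Measure.toSignedMeasure_sub_apply hA
  -- the two restricted measures compare
  have hle₁ : ν₂.restrict i ≤ ν₁.restrict i := by
    rw [Measure.le_iff]
    intro A hA
    rw [Measure.restrict_apply hA, Measure.restrict_apply hA]
    have h0 : 0 ≤ s (A ∩ i) := by
      have := (VectorMeasure.restrict_le_restrict_iff _ _ hi₁).1 hi₂
        (hA.inter hi₁) Set.inter_subset_right
      simpa using this
    rw [hsapp _ (hA.inter hi₁)] at h0
    exact (ENNReal.toReal_le_toReal (measure_ne_top _ _) (measure_ne_top _ _)).1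
      (by linarith)
  have hle₂ : ν₁.restrict iᶜ ≤ ν₂.restrict iᶜ := by
    rw [Measure.le_iff]
    intro A hA
    rw [Measure.restrict_apply hA, Measure.restrict_apply hA]
    have h0 : s (A ∩ iᶜ) ≤ 0 := by
      have := (VectorMeasure.restrict_le_restrict_iff _ _ hi₁.compl).1 hi₃
        (hA.inter hi₁.compl) Set.inter_subset_right
      simpa using this
    rw [hsapp _ (hA.inter hi₁.compl)] at h0
    exact (ENNReal.toReal_le_toReal (measure_ne_top _ _) (measure_ne_top _ _)).1
      (by linarith)
  set ρ₁ : Measure X := ν₁.restrict i - ν₂.restrict i with hρ₁_def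
  set ρ₂ : Measure X := ν₂.restrict iᶜ - ν₁.restrict iᶜ with hρ₂_def
  have hρ₁ : ρ₁ + ν₂.restrict i = ν₁.restrict i := Measure.sub_add_cancel_of_le hle₁
  have hρ₂ : ρ₂ + ν₁.restrict iᶜ = ν₂.restrict iᶜ := Measure.sub_add_cancel_of_le hle₂
  have e1 : ρ₁ Set.univ + ν₂ i = ν₁ i := by
    have := congrArg (fun m : Measure X => m Set.univ) hρ₁
    simpa [Measure.restrict_apply_univ] using this
  have e2 : ρ₂ Set.univ + ν₁ iᶜ = ν₂ iᶜ := by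
    have := congrArg (fun m : Measure X => m Set.univ) hρ₂
    simpa [Measure.restrict_apply_univ] using this
  have hρ₁top : ρ₁ Set.univ ≠ ⊤ := by
    intro h
    rw [h] at e1
    simp at e1
    exact (measure_ne_top ν₁ i) e1.symm
  have hρ₂top : ρ₂ Set.univ ≠ ⊤ := by
    intro h
    rw [h] at e2
    simp at e2
    exact (measure_ne_top ν₂ iᶜ) e2.symm
  -- equal masses
  have hmass : ρ₁ Set.univ = ρ₂ Set.univ := by
    have u1 : ν₁ i + ν₁ iᶜ = 1 := by
      rw [measure_add_measure_compl hi₁, measure_univ]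
    have u2 : ν₂ i + ν₂ iᶜ = 1 := by
      rw [measure_add_measure_compl hi₁, measure_univ]
    have h1 : ρ₁ Set.univ + (ν₂ i + ν₁ iᶜ) = 1 := by
      rw [← add_assoc, e1, u1]
    have h2 : ρ₂ Set.univ + (ν₂ i + ν₁ iᶜ) = 1 := by
      calc ρ₂ Set.univ + (ν₂ i + ν₁ iᶜ)
          = ρ₂ Set.univ + ν₁ iᶜ + ν₂ i := by ring
        _ = ν₂ iᶜ + ν₂ i := by rw [e2]
        _ = 1 := by rw [add_comm]; exact u2
    have hne : ν₂ i + ν₁ iᶜ ≠ ⊤ :=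
      ENNReal.add_ne_top.2 ⟨measure_ne_top _ _, measure_ne_top _ _⟩
    exact (ENNReal.add_left_inj hne).1 (h1.trans h2.symm)
  set t : ℝ := (ρ₁ Set.univ).toReal with ht_def
  have ht0 : 0 ≤ t := ENNReal.toReal_nonneg
  -- the key bound
  have key : ∀ E : Set X, MeasurableSet E →
      ((ν₁.bind p) E).toReal - ((ν₂.bind p) E).toReal ≤ (1 - ε) * t := by
    intro E hE
    have hb₁ : (ν₁.bind p) E =
        ∫⁻ x, p x E ∂(ν₂.restrict i) + ∫⁻ x, p x E ∂ρ₁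
          + ∫⁻ x, p x E ∂(ν₁.restrict iᶜ) := by
      rw [Measure.bind_apply hE p.measurable.aemeasurable]
      conv_lhs => rw [← Measure.restrict_add_restrict_compl (μ := ν₁) hi₁, ← hρ₁]
      rw [lintegral_add_measure, lintegral_add_measure]
      ring
    have hb₂ : (ν₂.bind p) E =
        ∫⁻ x, p x E ∂(ν₂.restrict i) + ∫⁻ x, p x E ∂ρ₂
          + ∫⁻ x, p x E ∂(ν₁.restrict iᶜ) := by
      rw [Measure.bind_apply hE p.measurable.aemeasurable]
      conv_lhs => rw [← Measure.restrict_add_restrict_compl (μ := ν₂) hi₁, ← hρ₂]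
      rw [lintegral_add_measure, lintegral_add_measure]
      ring
    have hfin : ∀ (m : Measure X), m Set.univ ≠ ⊤ → ∫⁻ x, p x E ∂m ≠ ⊤ := by
      intro m hm
      have : ∫⁻ x, p x E ∂m ≤ ∫⁻ _, 1 ∂m :=
        lintegral_mono fun x => prob_le_one
      rw [lintegral_one] at this
      exact ne_top_of_le_ne_top hm this
    have hA : ∫⁻ x, p x E ∂(ν₂.restrict i) ≠ ⊤ :=
      hfin _ (by rw [Measure.restrict_apply_univ]; exact measure_ne_top _ _)
    have hB : ∫⁻ x, p x E ∂ρ₁ ≠ ⊤ := hfin _ hρ₁top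
    have hC : ∫⁻ x, p x E ∂(ν₁.restrict iᶜ) ≠ ⊤ :=
      hfin _ (by rw [Measure.restrict_apply_univ]; exact measure_ne_top _ _)
    have hD : ∫⁻ x, p x E ∂ρ₂ ≠ ⊤ := hfin _ hρ₂top
    -- real difference equals B - D
    have hdiff : ((ν₁.bind p) E).toReal - ((ν₂.bind p) E).toReal =
        (∫⁻ x, p x E ∂ρ₁).toReal - (∫⁻ x, p x E ∂ρ₂).toReal := by
      rw [hb₁, hb₂, ENNReal.toReal_add (ENNReal.add_ne_top.2 ⟨hA, hB⟩) hC,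
        ENNReal.toReal_add (ENNReal.add_ne_top.2 ⟨hA, hD⟩) hC,
        ENNReal.toReal_add hA hB, ENNReal.toReal_add hA hD]
      ring
    -- bound B from above
    have hBle : ∫⁻ x, p x E ∂ρ₁ ≤ (1 - ENNReal.ofReal ε * μ Eᶜ) * ρ₁ Set.univ := by
      calc ∫⁻ x, p x E ∂ρ₁ ≤ ∫⁻ _, (1 - ENNReal.ofReal ε * μ Eᶜ) ∂ρ₁ := by
            apply lintegral_mono
            intro x
            have hsum : p x E + p x Eᶜ = 1 := by
              rw [measure_add_measure_compl hE]; exact measure_univ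
            have h1 : p x E + ENNReal.ofReal ε * μ Eᶜ ≤ 1 := by
              calc p x E + ENNReal.ofReal ε * μ Eᶜ ≤ p x E + p x Eᶜ :=
                    add_le_add_right (hdoeblin x Eᶜ hE.compl) _
                _ = 1 := hsum
            exact ENNReal.le_sub_of_add_le_right (ENNReal.mul_ne_top ENNReal.ofReal_ne_top (measure_ne_top _ _)) h1
        _ = (1 - ENNReal.ofReal ε * μ Eᶜ) * ρ₁ Set.univ := lintegral_const _
    -- bound D from below
    have hDge : ENNReal.ofReal ε * μ E * ρ₂ Set.univ ≤ ∫⁻ x, p x E ∂ρ₂ := by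
      calc ENNReal.ofReal ε * μ E * ρ₂ Set.univ
          = ∫⁻ _, ENNReal.ofReal ε * μ E ∂ρ₂ := (lintegral_const _).symm
        _ ≤ ∫⁻ x, p x E ∂ρ₂ := lintegral_mono fun x => hdoeblin x E hE
    set a : ℝ := (μ E).toReal with ha_def
    set b : ℝ := (μ Eᶜ).toReal with hb_def
    have hab : a + b = 1 := by
      rw [ha_def, hb_def, ← ENNReal.toReal_add (measure_ne_top _ _) (measure_ne_top _ _),
        measure_add_measure_compl hE, measure_univ, ENNReal.toReal_one]
    have ha0 : 0 ≤ a := ENNReal.toReal_nonneg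
    have hb0 : 0 ≤ b := ENNReal.toReal_nonneg
    have hμc_le : ENNReal.ofReal ε * μ Eᶜ ≤ 1 := by
      calc ENNReal.ofReal ε * μ Eᶜ ≤ 1 * 1 :=
            mul_le_mul' (ENNReal.ofReal_le_one.2 hε1) prob_le_one
        _ = 1 := one_mul 1
    have hBreal : (∫⁻ x, p x E ∂ρ₁).toReal ≤ (1 - ε * b) * t := by
      have h := ENNReal.toReal_mono (b := (1 - ENNReal.ofReal ε * μ Eᶜ) * ρ₁ Set.univ)
        (ENNReal.mul_ne_top (ne_top_of_le_ne_top ENNReal.one_ne_top tsub_le_self) hρ₁top)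
        hBle
      rw [ENNReal.toReal_mul, ENNReal.toReal_sub_of_le hμc_le ENNReal.one_ne_top,
        ENNReal.toReal_mul, ENNReal.toReal_ofReal hε0.le, ENNReal.toReal_one] at h
      exact h
    have hDreal : ε * a * t ≤ (∫⁻ x, p x E ∂ρ₂).toReal := by
      have h := ENNReal.toReal_mono hD hDge
      rw [ENNReal.toReal_mul, ENNReal.toReal_mul, ENNReal.toReal_ofReal hε0.le,
        ← hmass] at h
      exact h
    rw [hdiff]
    have heq : (1 - ε * b) * t - ε * a * t = (1 - ε) * t := by
      rw [show b = 1 - a by linarith]; ring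
    linarith
  -- total variation of s
  have hsi : s i = t := by
    have := congrArg ENNReal.toReal e1
    rw [ENNReal.toReal_add hρ₁top (measure_ne_top _ _)] at this
    rw [hsapp i hi₁]
    linarith
  have hsic : s iᶜ = -t := by
    have := congrArg ENNReal.toReal e2
    rw [ENNReal.toReal_add hρ₂top (measure_ne_top _ _)] at this
    rw [hsapp iᶜ hi₁.compl, ht_def, hmass]
    linarith
  have hTVs : s.totalVariation Set.univ = ENNReal.ofReal t + ENNReal.ofReal t := by
    simp only [SignedMeasure.totalVariation, Measure.add_apply, hpos, hneg,
      SignedMeasure.toMeasureOfZeroLE_apply _ hi₂ hi₁ MeasurableSet.univ,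
      SignedMeasure.toMeasureOfLEZero_apply _ hi₃ hi₁.compl MeasurableSet.univ,
      Set.inter_univ]
    exact congrArg₂ (· + ·) ((coe_nnreal_eq_ofReal _ _).trans (by rw [hsi]))
      ((coe_nnreal_eq_ofReal _ _).trans (by rw [hsic, neg_neg]))
  -- total variation of s'
  obtain ⟨k, hk₁, hk₂, hk₃, h'pos, h'neg⟩ := s'.toJordanDecomposition_spec
  have hs'univ : s' Set.univ = 0 := by
    have hb : ∀ (ν : Measure X) [IsProbabilityMeasure ν] [IsFiniteMeasure (ν.bind p)],
        (ν.bind p) Set.univ = 1 := by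
      intro ν _ _
      rw [Measure.bind_apply MeasurableSet.univ p.measurable.aemeasurable]
      simp [measure_univ]
    rw [hs'_def, Measure.toSignedMeasure_sub_apply MeasurableSet.univ, measureReal_def, measureReal_def, hb ν₁, hb ν₂]
    simp
  have hs'compl : s' kᶜ = -(s' k) := by
    have := s'.of_union (disjoint_compl_right) hk₁ hk₁.compl
    rw [Set.union_compl_self, hs'univ] at this
    linarith
  have hkle : s' k ≤ (1 - ε) * t := by
    rw [hs'_def, Measure.toSignedMeasure_sub_apply hk₁]
    exact key k hk₁
  have hTVs' : s'.totalVariation Set.univ =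
      ENNReal.ofReal (s' k) + ENNReal.ofReal (-(s' kᶜ)) := by
    simp only [SignedMeasure.totalVariation, Measure.add_apply, h'pos, h'neg,
      SignedMeasure.toMeasureOfZeroLE_apply _ hk₂ hk₁ MeasurableSet.univ,
      SignedMeasure.toMeasureOfLEZero_apply _ hk₃ hk₁.compl MeasurableSet.univ,
      Set.inter_univ]
    exact congrArg₂ (· + ·) (coe_nnreal_eq_ofReal _ _) (coe_nnreal_eq_ofReal _ _)
  rw [hTVs', hTVs, hs'compl, neg_neg]
  have h1ε : (0:ℝ) ≤ 1 - ε := by linarith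
  calc ENNReal.ofReal (s' k) + ENNReal.ofReal (s' k)
      ≤ ENNReal.ofReal ((1 - ε) * t) + ENNReal.ofReal ((1 - ε) * t) :=
        add_le_add (ENNReal.ofReal_le_ofReal hkle) (ENNReal.ofReal_le_ofReal hkle)
    _ = ENNReal.ofReal (1 - ε) * (ENNReal.ofReal t + ENNReal.ofReal t) := by
        rw [ENNReal.ofReal_mul h1ε, mul_add]

end Aux


/-- Under Doeblin's condition `p(x,E) ≥ ε μ(E)` (with `0 < ε ≤ 1`), the induced operator
`T : ν ↦ ν.bind p` contracts the total variation distance between probability measures by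
the factor `1 - ε`, and consequently has at most one invariant probability measure. -/
theorem doeblin_contraction_and_uniqueness
    {X : Type*} [MeasurableSpace X] (p : Kernel X X) [IsMarkovKernel p]
    (μ : Measure X) [IsProbabilityMeasure μ] (ε : ℝ) (hε0 : 0 < ε) (hε1 : ε ≤ 1)
    (hdoeblin : ∀ (x : X) (E : Set X), MeasurableSet E →
      ENNReal.ofReal ε * μ E ≤ p x E)
    (ν₁ ν₂ : Measure X) [IsProbabilityMeasure ν₁] [IsProbabilityMeasure ν₂]
    [IsFiniteMeasure (ν₁.bind p)] [IsFiniteMeasure (ν₂.bind p)] :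
    (((ν₁.bind p).toSignedMeasure - (ν₂.bind p).toSignedMeasure).totalVariation Set.univ
      ≤ ENNReal.ofReal (1 - ε) *
        ((ν₁.toSignedMeasure - ν₂.toSignedMeasure).totalVariation Set.univ)) ∧
    (∀ m₁ m₂ : Measure X, IsProbabilityMeasure m₁ → IsProbabilityMeasure m₂ →
      m₁.bind p = m₁ → m₂.bind p = m₂ → m₁ = m₂) := by
  refine ⟨doeblin_tv_contraction p μ ε hε0 hε1 hdoeblin ν₁ ν₂, ?_⟩
  intro m₁ m₂ hpm₁ hpm₂ hm₁ hm₂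
  haveI := hpm₁; haveI := hpm₂
  haveI : IsFiniteMeasure (m₁.bind p) := by rw [hm₁]; infer_instance
  haveI : IsFiniteMeasure (m₂.bind p) := by rw [hm₂]; infer_instance
  have hc := doeblin_tv_contraction p μ ε hε0 hε1 hdoeblin m₁ m₂
  rw [Measure.toSignedMeasure_congr hm₁, Measure.toSignedMeasure_congr hm₂] at hc
  set d := (m₁.toSignedMeasure - m₂.toSignedMeasure).totalVariation Set.univ with hd_def
  have hd_ne_top : d ≠ ⊤ := by
    rw [hd_def]
    simp only [SignedMeasure.totalVariation, Measure.add_apply]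
    exact ENNReal.add_ne_top.2 ⟨measure_ne_top _ _, measure_ne_top _ _⟩
  have hd0 : d = 0 := by
    by_contra h0
    have hlt : ENNReal.ofReal (1 - ε) < 1 := ENNReal.ofReal_lt_one.2 (by linarith)
    have : ENNReal.ofReal (1 - ε) * d < 1 * d :=
      ENNReal.mul_lt_mul_left h0 hd_ne_top hlt
    rw [one_mul] at this
    exact absurd (lt_of_le_of_lt hc this) (lt_irrefl d)
  ext E hE
  have hTV0 : (m₁.toSignedMeasure - m₂.toSignedMeasure).totalVariation E = 0 :=
    le_antisymm (hd0 ▸ measure_mono (Set.subset_univ E)) zero_le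
  have hz := SignedMeasure.null_of_totalVariation_zero _ hTV0
  rw [Measure.toSignedMeasure_sub_apply hE] at hz
  have := sub_eq_zero.1 hz
  exact (ENNReal.toReal_eq_toReal_iff' (measure_ne_top _ _) (measure_ne_top _ _)).1 this
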